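/- If an L∞[1] R-algebra (L, d_L, q_2, q_3, ...) is R-linearizable (i.e., isomorphic as an L∞[1] R-algebra to the abelian L∞[1] R-algebra (L, d_L, 0, 0, ...)), then the cohomology class [q_2] of the binary bracket vanishes in H^1(Hom_R(L^{⊙_R 2}, L), d_L). -/

import Mathlib

open scoped Classical TensorProduct

namespace Paper

noncomputable section
/-- `(-1)^i` for an integer `i`. -/
def sgn (i : ℤ) : ℤ := (-1) ^ i.natAbs

/-- The Koszul sign of a permutation `σ` acting on homogeneous elements
of degrees `deg`. -/
def koszulSign {n : ℕ} (deg : Fin n → ℤ) (σ : Equiv.Perm (Fin n)) : ℤ :=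
  ∏ p ∈ Finset.univ.filter (fun p : Fin n × Fin n => p.1 < p.2 ∧ σ p.2 < σ p.1),
    sgn (deg p.1 * deg p.2)

/-- `σ` is an `(i, n-i)`-unshuffle: it is increasing on the first `i`
positions and on the last `n - i` positions. -/
def IsUnshuffle (n i : ℕ) (σ : Equiv.Perm (Fin n)) : Prop :=
  ∀ a b : Fin n, a < b → (b.1 < i ∨ i ≤ a.1) → σ a < σ b

/-- `σ` is a multi-unshuffle with respect to the composition `c` of `n`:
it is increasing on each block of `c`. -/
def IsMultiUnshuffle {n : ℕ} (c : Composition n) (σ : Equiv.Perm (Fin n)) : Prop :=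
  ∀ a b : Fin n, a < b → c.index a = c.index b → σ a < σ b

/-- Iterated bracketing `[⋯[[z, y₀], y₁]⋯, y_{k-1}]`. -/
def iterBr {M : Type} (br : M → M → M) : (k : ℕ) → M → (Fin k → M) → M
  | 0, z, _ => z
  | k + 1, z, y => iterBr br k (br z (y 0)) (fun j => y j.succ)

section Defs

variable (K : Type) [Field K] (A : Type) [CommRing A] [Algebra K A]
variable (L : Type) [AddCommGroup L] [Module K L] [Module A L]
variable (M : Type) [AddCommGroup M] [Module K M] [Module A M]

/-- `(A, 𝒜, dA)` is a unital differential graded-commutative algebra over `K`. -/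
structure IsDGCA (𝒜 : ℤ → Submodule K A) (dA : A →ₗ[K] A) : Prop where
  isInternal : DirectSum.IsInternal 𝒜
  one_mem : (1 : A) ∈ 𝒜 0
  mul_mem : ∀ i j : ℤ, ∀ a b : A, a ∈ 𝒜 i → b ∈ 𝒜 j → a * b ∈ 𝒜 (i + j)
  mul_comm' : ∀ i j : ℤ, ∀ a b : A, a ∈ 𝒜 i → b ∈ 𝒜 j → a * b = sgn (i * j) • (b * a)
  d_mem : ∀ i : ℤ, ∀ a ∈ 𝒜 i, dA a ∈ 𝒜 (i + 1)
  d_sq : ∀ a, dA (dA a) = 0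
  leibniz : ∀ i : ℤ, ∀ a ∈ 𝒜 i, ∀ b, dA (a * b) = dA a * b + sgn i • (a * dA b)

/-- `(L, ℒ, dL)` is a DG module over the DGCA `(A, 𝒜, dA)`. -/
structure IsDGModule (𝒜 : ℤ → Submodule K A) (dA : A →ₗ[K] A)
    (ℒ : ℤ → Submodule K L) (dL : L →ₗ[K] L) : Prop where
  isInternal : DirectSum.IsInternal ℒ
  smul_mem : ∀ i j : ℤ, ∀ (a : A) (x : L), a ∈ 𝒜 i → x ∈ ℒ j → a • x ∈ ℒ (i + j)
  d_mem : ∀ j : ℤ, ∀ x ∈ ℒ j, dL x ∈ ℒ (j + 1)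
  d_sq : ∀ x, dL (dL x) = 0
  leibniz : ∀ i : ℤ, ∀ a ∈ 𝒜 i, ∀ x : L, dL (a • x) = dA a • x + sgn i • (a • dL x)

/-- A graded symmetric, graded `A`-multilinear map of degree `dg`. -/
structure IsGSMap (𝒜 : ℤ → Submodule K A) (ℒ : ℤ → Submodule K L)
    (ℳ : ℤ → Submodule K M) (dg : ℤ) (n : ℕ)
    (q : MultilinearMap K (fun _ : Fin n => L) M) : Prop where
  degree : ∀ (deg : Fin n → ℤ) (x : Fin n → L), (∀ k, x k ∈ ℒ (deg k)) →
    q x ∈ ℳ ((∑ k, deg k) + dg)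
  symm : ∀ (deg : Fin n → ℤ) (x : Fin n → L), (∀ k, x k ∈ ℒ (deg k)) →
    ∀ σ : Equiv.Perm (Fin n), q (x ∘ σ) = koszulSign deg σ • q x
  smul : ∀ (hn : 0 < n) (i : ℤ), ∀ a ∈ 𝒜 i, ∀ x : Fin n → L,
    q (Function.update x ⟨0, hn⟩ (a • x ⟨0, hn⟩)) = sgn (i * dg) • (a • q x)

/-- The sum `Σ_{i} Σ_{σ ∈ Sh(i, n-i)} ± outer_{n-i+1}(inner_i(x_{σ(1)},…), x_{σ(i+1)},…)`
appearing in the `L∞[1]` identities (with Koszul signs w.r.t. degrees `deg`). -/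
def insComp (outer : ∀ k : ℕ, MultilinearMap K (fun _ : Fin k => L) M)
    (inner : ∀ k : ℕ, MultilinearMap K (fun _ : Fin k => L) L)
    (n : ℕ) (deg : Fin n → ℤ) (x : Fin n → L) : M :=
  ∑ i : Fin (n + 1),
    ∑ σ ∈ Finset.univ.filter (fun σ : Equiv.Perm (Fin n) => IsUnshuffle n i.1 σ),
      koszulSign deg σ •
        outer (n - i.1 + 1)
          (Fin.cons
            (inner i.1 (fun k => x (σ (Fin.castLE (Nat.lt_succ_iff.mp i.isLt) k))))
            (fun k => x (σ ⟨i.1 + k.1, by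
              have h1 := i.isLt
              have h2 := k.isLt
              omega⟩)))

/-- The family of operations whose only nonzero component is the unary one, `d`. -/
def fam1 (d : L →ₗ[K] L) : ∀ n, MultilinearMap K (fun _ : Fin n => L) L
  | 1 => MultilinearMap.ofSubsingleton K L L (0 : Fin 1) d
  | _ => 0

/-- The family of operations whose only nonzero component is the `0`-ary one,
with value `x`. -/
def fam0 (x : L) : ∀ n, MultilinearMap K (fun _ : Fin n => L) L
  | 0 => MultilinearMap.constOfIsEmpty K (fun _ : Fin 0 => L) x
  | _ + 1 => 0

/-- The generalized Jacobi identities of an `L∞[1]` algebra (on homogeneous elements). -/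
def LInftyIdentity (ℒ : ℤ → Submodule K L)
    (q : ∀ k, MultilinearMap K (fun _ : Fin k => L) L) : Prop :=
  ∀ (n : ℕ) (deg : Fin n → ℤ) (x : Fin n → L), 1 ≤ n → (∀ k, x k ∈ ℒ (deg k)) →
    insComp K L L q q n deg x = 0

/-- An `L∞[1]` `R`-algebra structure (with `R = (A, 𝒜, dA)`) on the DG module
`(L, ℒ, dL)`; `q 1 = dL` and the higher brackets are graded symmetric graded
`A`-multilinear maps of degree 1 satisfying the generalized Jacobi identities. -/
structure IsLInftyAlg (𝒜 : ℤ → Submodule K A) (dA : A →ₗ[K] A)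
    (ℒ : ℤ → Submodule K L) (dL : L →ₗ[K] L)
    (q : ∀ k, MultilinearMap K (fun _ : Fin k => L) L) : Prop where
  dgca : IsDGCA K A 𝒜 dA
  dgmod : IsDGModule K A L 𝒜 dA ℒ dL
  q_zero : q 0 = 0
  q_one : ∀ x : L, q 1 (fun _ => x) = dL x
  gs : ∀ n, 2 ≤ n → IsGSMap K A L L 𝒜 ℒ ℒ 1 n (q n)
  jacobi : LInftyIdentity K L ℒ q

/-- `f` is a quasi-isomorphism of cochain complexes. -/
structure IsQuasiIso (dL : L →ₗ[K] L) (dM : M →ₗ[K] M) (f : L →ₗ[K] M) : Prop where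
  cochain : ∀ x, f (dL x) = dM (f x)
  surj : ∀ y : M, dM y = 0 → ∃ x z, dL x = 0 ∧ y = f x + dM z
  inj : ∀ x : L, dL x = 0 → (∃ z, f x = dM z) → ∃ w, x = dL w

/-- The sum over compositions `i₁ + ⋯ + i_k = n` (with `lo ≤ k`) and multi-unshuffles
`Σ (1/k!) Σ_σ ± post (outer_k (inner_{i₁}(x_{σ(1)},…), …, inner_{i_k}(…, x_{σ(n)})))`. -/
def treeSum {X Y W Z : Type} [AddCommGroup X] [Module K X] [AddCommGroup Y] [Module K Y]
    [AddCommGroup W] [Module K W] [AddCommGroup Z] [Module K Z]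
    (outer : ∀ k : ℕ, MultilinearMap K (fun _ : Fin k => Y) W)
    (inner : ∀ m : ℕ, MultilinearMap K (fun _ : Fin m => X) Y)
    (post : W →ₗ[K] Z) (lo : ℕ) (n : ℕ) (deg : Fin n → ℤ) (x : Fin n → X) : Z :=
  ∑ c : Composition n,
    if lo ≤ c.length then
      ∑ σ ∈ Finset.univ.filter (fun σ : Equiv.Perm (Fin n) => IsMultiUnshuffle c σ),
        ((c.length).factorial : K)⁻¹ •
          (koszulSign deg σ •
            post (outer c.length
              (fun m => inner (c.blocksFun m) (fun t => x (σ (c.embedding m t))))))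
    else 0

/-- `f = (f₁, f₂, …)` is an `L∞[1]` `R`-morphism from `(L, qL)` to `(M, qM)`. -/
structure IsLInftyMorph (𝒜 : ℤ → Submodule K A)
    (ℒ : ℤ → Submodule K L) (ℳ : ℤ → Submodule K M)
    (qL : ∀ k, MultilinearMap K (fun _ : Fin k => L) L)
    (qM : ∀ k, MultilinearMap K (fun _ : Fin k => M) M)
    (f : ∀ m, MultilinearMap K (fun _ : Fin m => L) M) : Prop where
  f_zero : f 0 = 0
  gs : ∀ n, 1 ≤ n → IsGSMap K A L M 𝒜 ℒ ℳ 0 n (f n)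
  identity : ∀ (n : ℕ) (deg : Fin n → ℤ) (x : Fin n → L), 1 ≤ n →
    (∀ k, x k ∈ ℒ (deg k)) →
    treeSum K qM f (LinearMap.id : M →ₗ[K] M) 1 n deg x = insComp K L M f qL n deg x

/-- The composition of two `L∞[1]`-morphism coefficient families, evaluated on a
homogeneous tuple. -/
def compFam {N : Type} [AddCommGroup N] [Module K N]
    (outer : ∀ k, MultilinearMap K (fun _ : Fin k => M) N)
    (inner : ∀ m, MultilinearMap K (fun _ : Fin m => L) M)
    (n : ℕ) (deg : Fin n → ℤ) (x : Fin n → L) : N :=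
  treeSum K outer inner (LinearMap.id : N →ₗ[K] N) 1 n deg x

/-- `f` is an `L∞[1]` `R`-isomorphism: it admits a two-sided inverse morphism. -/
def IsLInftyIso (𝒜 : ℤ → Submodule K A)
    (ℒ : ℤ → Submodule K L) (ℳ : ℤ → Submodule K M)
    (qL : ∀ k, MultilinearMap K (fun _ : Fin k => L) L)
    (qM : ∀ k, MultilinearMap K (fun _ : Fin k => M) M)
    (f : ∀ m, MultilinearMap K (fun _ : Fin m => L) M) : Prop :=
  IsLInftyMorph K A L M 𝒜 ℒ ℳ qL qM f ∧
  ∃ g : ∀ m, MultilinearMap K (fun _ : Fin m => M) L,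
    IsLInftyMorph K A M L 𝒜 ℳ ℒ qM qL g ∧
    (∀ (n : ℕ) (deg : Fin n → ℤ) (x : Fin n → L), 1 ≤ n → (∀ k, x k ∈ ℒ (deg k)) →
      compFam K L M g f n deg x = fam1 K L (LinearMap.id : L →ₗ[K] L) n x) ∧
    (∀ (n : ℕ) (deg : Fin n → ℤ) (y : Fin n → M), 1 ≤ n → (∀ k, y k ∈ ℳ (deg k)) →
      compFam K M L f g n deg y = fam1 K M (LinearMap.id : M →ₗ[K] M) n y)

/-- A DG Lie algebra over the DGCA `(A, 𝒜, dA)`: a DG `A`-module with an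
`A`-bilinear graded Lie bracket compatible with the differential. -/
structure IsDGLie (𝒜 : ℤ → Submodule K A) (dA : A →ₗ[K] A)
    (ℒ : ℤ → Submodule K L) (D : L →ₗ[K] L) (br : L →ₗ[K] L →ₗ[K] L) : Prop where
  dgmod : IsDGModule K A L 𝒜 dA ℒ D
  br_mem : ∀ i j : ℤ, ∀ x y : L, x ∈ ℒ i → y ∈ ℒ j → br x y ∈ ℒ (i + j)
  skew : ∀ i j : ℤ, ∀ x y : L, x ∈ ℒ i → y ∈ ℒ j → br x y = (- sgn (i * j)) • br y x
  jacobi : ∀ i j : ℤ, ∀ x y z : L, x ∈ ℒ i → y ∈ ℒ j →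
    br x (br y z) = br (br x y) z + sgn (i * j) • br y (br x z)
  leibniz : ∀ i : ℤ, ∀ x ∈ ℒ i, ∀ y, D (br x y) = br (D x) y + sgn i • br x (D y)
  smul_br : ∀ (a : A) (x y : L), br (a • x) y = a • br x y

end Defs


section Aux

lemma sgn_zero : sgn 0 = 1 := rfl

lemma sgn_even {a : ℤ} (h : Even a) : sgn a = 1 := by
  unfold sgn
  exact Even.neg_one_pow (Int.natAbs_even.mpr h)

lemma sgn_odd {a : ℤ} (h : Odd a) : sgn a = -1 := by
  unfold sgn
  exact Odd.neg_one_pow (Int.natAbs_odd.mpr h)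

lemma sgn_add (a b : ℤ) : sgn (a + b) = sgn a * sgn b := by
  rcases Int.even_or_odd a with ha | ha <;> rcases Int.even_or_odd b with hb | hb
  · rw [sgn_even ha, sgn_even hb, sgn_even (Even.add ha hb), one_mul]
  · rw [sgn_even ha, sgn_odd hb, sgn_odd (Even.add_odd ha hb), one_mul]
  · rw [sgn_odd ha, sgn_even hb, sgn_odd (Odd.add_even ha hb), mul_one]
  · rw [sgn_odd ha, sgn_odd hb, sgn_even (Odd.add_odd ha hb)]; norm_num

lemma koszulSign_one {n : ℕ} (deg : Fin n → ℤ) : koszulSign deg 1 = 1 := by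
  unfold koszulSign
  rw [Finset.filter_false_of_mem, Finset.prod_empty]
  rintro p - ⟨h1, h2⟩
  simp only [Equiv.Perm.one_apply] at h2
  exact lt_asymm h1 h2

lemma perm1_univ : (Finset.univ : Finset (Equiv.Perm (Fin 1))) = {1} := by decide

lemma perm2_univ : (Finset.univ : Finset (Equiv.Perm (Fin 2))) = {1, Equiv.swap 0 1} := by
  decide

lemma perm2_cases (σ : Equiv.Perm (Fin 2)) : σ = 1 ∨ σ = Equiv.swap 0 1 := by
  revert σ; decide

lemma koszulSign_swap (deg : Fin 2 → ℤ) :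
    koszulSign deg (Equiv.swap 0 1) = sgn (deg 0 * deg 1) := by
  unfold koszulSign
  have h : (Finset.univ.filter (fun p : Fin 2 × Fin 2 =>
      p.1 < p.2 ∧ (Equiv.swap 0 1) p.2 < (Equiv.swap 0 1) p.1)) = {((0 : Fin 2), (1 : Fin 2))} := by
    decide
  rw [h, Finset.prod_singleton]

/-- The composition `[1]` of `1`. -/
def cOne : Composition 1 := ⟨[1], by intro i hi; simp at hi; omega, by simp⟩

/-- The composition `[2]` of `2`. -/
def cTwo : Composition 2 := ⟨[2], by intro i hi; simp at hi; omega, by simp⟩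

/-- The composition `[1,1]` of `2`. -/
def cOneOne : Composition 2 := ⟨[1, 1], by intro i hi; simp at hi; omega, by simp⟩

lemma comp1_eq (c : Composition 1) : c = cOne := by
  obtain ⟨bl, pos, hsum⟩ := c
  rcases bl with - | ⟨a, bl⟩
  · simp at hsum
  rcases bl with - | ⟨b, bl⟩
  · simp at hsum; subst hsum; rfl
  · exfalso
    have ha : 0 < a := pos (by simp)
    have hb : 0 < b := pos (by simp)
    simp [List.sum_cons] at hsum
    omega

lemma comp2_eq (c : Composition 2) : c = cTwo ∨ c = cOneOne := by
  obtain ⟨bl, pos, hsum⟩ := c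
  rcases bl with - | ⟨a, bl⟩
  · simp at hsum
  rcases bl with - | ⟨b, bl⟩
  · left; simp at hsum; subst hsum; rfl
  rcases bl with - | ⟨d, bl⟩
  · right
    have ha : 0 < a := pos (by simp)
    have hb : 0 < b := pos (by simp)
    simp [List.sum_cons] at hsum
    have : a = 1 ∧ b = 1 := by omega
    obtain ⟨rfl, rfl⟩ := this
    rfl
  · exfalso
    have ha : 0 < a := pos (by simp)
    have hb : 0 < b := pos (by simp)
    have hd : 0 < d := pos (by simp)
    simp [List.sum_cons] at hsum
    omega

lemma cTwo_ne : cTwo ≠ cOneOne := by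
  intro h
  have := congrArg Composition.blocks h
  simp [cTwo, cOneOne] at this

lemma comp2_univ : (Finset.univ : Finset (Composition 2)) = {cTwo, cOneOne} := by
  ext c
  simpa using comp2_eq c

lemma add_left_zero_trans {M : Type} [AddCommGroup M] {a b c : M}
    (ha : a = 0) (hb : b = c) : a + b = c := by rw [ha, hb, zero_add]

lemma sum3_eq {M : Type} [AddCommGroup M] {a b c b' c' : M}
    (ha : a = 0) (hb : b = b') (hc : c = c') : a + b + c = b' + c' := by
  rw [ha, hb, hc, zero_add]

section EvalLemmas

variable (K : Type) [Field K]

lemma treeSum_one {X Y W : Type} [AddCommGroup X] [Module K X] [AddCommGroup Y] [Module K Y]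
    [AddCommGroup W] [Module K W]
    (outer : ∀ k : ℕ, MultilinearMap K (fun _ : Fin k => Y) W)
    (inner : ∀ m : ℕ, MultilinearMap K (fun _ : Fin m => X) Y)
    (deg : Fin 1 → ℤ) (x : Fin 1 → X) :
    treeSum K outer inner (LinearMap.id : W →ₗ[K] W) 1 1 deg x
      = outer 1 (fun _ => inner 1 (fun _ => x 0)) := by
  unfold treeSum
  rw [Fintype.sum_eq_single cOne (fun c hc => (hc (comp1_eq c)).elim)]
  rw [if_pos (by decide : 1 ≤ cOne.length)]
  rw [Finset.sum_filter, perm1_univ, Finset.sum_singleton]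
  rw [if_pos (by
    intro a b hab _
    exact absurd hab (by rw [Subsingleton.elim a b]; exact lt_irrefl b))]
  rw [koszulSign_one, one_smul]
  have hfac : (((cOne.length).factorial : ℕ) : K)⁻¹ = 1 := by
    rw [show cOne.length = 1 from rfl]; norm_num [Nat.factorial]
  rw [hfac, one_smul, LinearMap.id_apply]
  show outer 1 (fun m : Fin 1 => inner (cOne.blocksFun m)
      (fun t => x ((1 : Equiv.Perm (Fin 1)) (cOne.embedding m t))))
    = outer 1 (fun _ => inner 1 (fun _ => x 0))
  refine congrArg (outer 1) (funext fun m => ?_)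
  rw [Subsingleton.elim m 0]
  show inner 1 _ = inner 1 _
  exact congrArg (inner 1) (funext fun t => congrArg x (Subsingleton.elim _ _))

lemma treeSum_fam1_two {L M : Type} [AddCommGroup L] [Module K L] [AddCommGroup M] [Module K M]
    (d : M →ₗ[K] M)
    (f : ∀ m : ℕ, MultilinearMap K (fun _ : Fin m => L) M)
    (deg : Fin 2 → ℤ) (x : Fin 2 → L) :
    treeSum K (fam1 K M d) f (LinearMap.id : M →ₗ[K] M) 1 2 deg x = d (f 2 x) := by
  unfold treeSum
  rw [comp2_univ, Finset.sum_insert (by simpa using cTwo_ne), Finset.sum_singleton]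
  have h11 : (if 1 ≤ cOneOne.length then
      ∑ σ ∈ Finset.univ.filter (fun σ : Equiv.Perm (Fin 2) => IsMultiUnshuffle cOneOne σ),
        (((cOneOne.length).factorial : K)⁻¹ •
          (koszulSign deg σ •
            (LinearMap.id : M →ₗ[K] M) ((fam1 K M d) cOneOne.length
              (fun m => f (cOneOne.blocksFun m)
                (fun t => x (σ (cOneOne.embedding m t)))))))
      else 0) = 0 := by
    rw [if_pos (by decide)]
    refine Finset.sum_eq_zero fun σ _ => ?_
    rw [show (fam1 K M d) cOneOne.length = 0 from rfl]
    simp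
  rw [h11, add_zero]
  rw [if_pos (by decide : 1 ≤ cTwo.length)]
  rw [Finset.sum_filter, perm2_univ, Finset.sum_insert (by decide), Finset.sum_singleton]
  rw [if_pos (by
    intro a b hab _
    simpa using hab)]
  rw [if_neg (by
    intro hmu
    have h1 : ((cTwo.index 0 : Fin cTwo.length) : ℕ) < 1 := (cTwo.index 0).2
    have h2 : ((cTwo.index 1 : Fin cTwo.length) : ℕ) < 1 := (cTwo.index 1).2
    have := hmu 0 1 (by decide) (Fin.ext (by omega))
    exact absurd this (by decide))]
  rw [add_zero, koszulSign_one, one_smul]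
  have hfac : (((cTwo.length).factorial : ℕ) : K)⁻¹ = 1 := by
    rw [show cTwo.length = 1 from rfl]; norm_num [Nat.factorial]
  rw [hfac, one_smul, LinearMap.id_apply]
  show (MultilinearMap.ofSubsingleton K M M (0 : Fin 1) d)
      (fun m : Fin 1 => f (cTwo.blocksFun m)
        (fun t => x ((1 : Equiv.Perm (Fin 2)) (cTwo.embedding m t)))) = d (f 2 x)
  rw [MultilinearMap.ofSubsingleton_apply_apply]
  show d (f 2 (fun t => x ((1 : Equiv.Perm (Fin 2)) (cTwo.embedding (0 : Fin 1) t)))) = d (f 2 x)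
  refine congrArg d (congrArg (f 2) (funext fun t => congrArg x ?_))
  rw [Equiv.Perm.one_apply]
  refine Fin.ext ?_
  show cTwo.sizeUpTo (((0 : Fin 1) : Fin cTwo.length) : ℕ) + (t : ℕ) = t
  have h0 : cTwo.sizeUpTo (((0 : Fin 1) : Fin cTwo.length) : ℕ) = 0 := by
    simp [Composition.sizeUpTo]
  rw [h0, zero_add]

lemma insComp_one {L M : Type} [AddCommGroup L] [Module K L] [AddCommGroup M] [Module K M]
    (F : ∀ k : ℕ, MultilinearMap K (fun _ : Fin k => L) M)
    (Q : ∀ k : ℕ, MultilinearMap K (fun _ : Fin k => L) L)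
    (hQ0 : Q 0 = 0) (deg : Fin 1 → ℤ) (x : Fin 1 → L) :
    insComp K L M F Q 1 deg x = F 1 (fun _ => Q 1 (fun _ => x 0)) := by
  unfold insComp
  rw [Fin.sum_univ_two]
  refine add_left_zero_trans ?_ ?_
  · refine Finset.sum_eq_zero fun σ _ => ?_
    refine smul_eq_zero_of_right _ ?_
    refine MultilinearMap.map_coord_zero _ 0 ?_
    rw [Fin.cons_zero]
    rw [show Q (((0 : Fin 2) : ℕ)) = 0 from hQ0]
    rfl
  · show (∑ σ ∈ Finset.univ.filter (fun σ : Equiv.Perm (Fin 1) => IsUnshuffle 1 1 σ),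
        koszulSign deg σ • F 1 (Fin.cons ((Q 1) fun k => x (σ (Fin.castLE (by omega) k)))
          (fun k : Fin 0 => x (σ ⟨1 + (k : ℕ), by omega⟩))))
      = F 1 (fun _ => Q 1 (fun _ => x 0))
    rw [Finset.sum_filter, perm1_univ, Finset.sum_singleton]
    rw [if_pos (show IsUnshuffle 1 1 1 by
      intro a b hab _
      exact absurd hab (by rw [Subsingleton.elim a b]; exact lt_irrefl b))]
    rw [koszulSign_one, one_smul]
    refine congrArg (F 1) (funext fun j => ?_)
    refine Fin.cases ?_ (fun k => Fin.elim0 k) j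
    rw [Fin.cons_zero]
    exact congrArg (Q 1) (funext fun k => congrArg x (Subsingleton.elim _ _))

lemma insComp_two {L M : Type} [AddCommGroup L] [Module K L] [AddCommGroup M] [Module K M]
    (F : ∀ k : ℕ, MultilinearMap K (fun _ : Fin k => L) M)
    (Q : ∀ k : ℕ, MultilinearMap K (fun _ : Fin k => L) L)
    (hQ0 : Q 0 = 0) (dq : L → L) (hQ1 : ∀ z, Q 1 (fun _ => z) = dq z)
    (deg : Fin 2 → ℤ) (x : Fin 2 → L) :
    insComp K L M F Q 2 deg x
      = F 2 ![dq (x 0), x 1] + sgn (deg 0 * deg 1) • F 2 ![dq (x 1), x 0]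
        + F 1 (fun _ => Q 2 x) := by
  unfold insComp
  rw [Fin.sum_univ_three]
  refine sum3_eq ?_ ?_ ?_
  · refine Finset.sum_eq_zero fun σ _ => ?_
    refine smul_eq_zero_of_right _ ?_
    refine MultilinearMap.map_coord_zero _ 0 ?_
    rw [Fin.cons_zero]
    rw [show Q (((0 : Fin 3) : ℕ)) = 0 from hQ0]
    rfl
  · show (∑ σ ∈ Finset.univ.filter (fun σ : Equiv.Perm (Fin 2) => IsUnshuffle 2 1 σ),
        koszulSign deg σ • F 2 (Fin.cons ((Q 1) fun k => x (σ (Fin.castLE (by omega) k)))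
          (fun k : Fin 1 => x (σ ⟨1 + (k : ℕ), by omega⟩))))
      = F 2 ![dq (x 0), x 1] + sgn (deg 0 * deg 1) • F 2 ![dq (x 1), x 0]
    rw [Finset.filter_true_of_mem (fun σ _ => show IsUnshuffle 2 1 σ by
      intro a b hab hor
      have hab2 : a.1 < b.1 := hab
      have hb2 := b.2
      exact absurd hor (by omega))]
    rw [perm2_univ, Finset.sum_insert (by decide), Finset.sum_singleton,
      koszulSign_one, one_smul, koszulSign_swap]
    congr 1
    · refine congrArg (F 2) (funext fun j => ?_)
      refine Fin.cases ?_ (fun k => ?_) j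
      · rw [Fin.cons_zero, show ((![dq (x 0), x 1] : Fin 2 → L) 0) = dq (x 0) from rfl, ← hQ1]
        refine congrArg (Q 1) (funext fun k => ?_)
        rw [Subsingleton.elim k 0]
        exact congrArg x (by decide)
      · rw [Fin.cons_succ, Subsingleton.elim k 0]
        rw [show ((![dq (x 0), x 1] : Fin 2 → L) (Fin.succ 0)) = x 1 from rfl]
        exact congrArg x (by decide)
    · congr 1
      refine congrArg (F 2) (funext fun j => ?_)
      refine Fin.cases ?_ (fun k => ?_) j
      · rw [Fin.cons_zero, show ((![dq (x 1), x 0] : Fin 2 → L) 0) = dq (x 1) from rfl, ← hQ1]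
        refine congrArg (Q 1) (funext fun k => ?_)
        rw [Subsingleton.elim k 0]
        exact congrArg x (by decide)
      · rw [Fin.cons_succ, Subsingleton.elim k 0]
        rw [show ((![dq (x 1), x 0] : Fin 2 → L) (Fin.succ 0)) = x 0 from rfl]
        exact congrArg x (by decide)
  · show (∑ σ ∈ Finset.univ.filter (fun σ : Equiv.Perm (Fin 2) => IsUnshuffle 2 2 σ),
        koszulSign deg σ • F 1 (Fin.cons ((Q 2) fun k => x (σ (Fin.castLE (by omega) k)))
          (fun k : Fin 0 => x (σ ⟨2 + (k : ℕ), by omega⟩))))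
      = F 1 (fun _ => Q 2 x)
    rw [Finset.sum_filter, perm2_univ, Finset.sum_insert (by decide), Finset.sum_singleton]
    rw [if_pos (show IsUnshuffle 2 2 1 by intro a b hab _; simpa using hab)]
    rw [if_neg (show ¬ IsUnshuffle 2 2 (Equiv.swap 0 1) from
      fun hsh => absurd (hsh 0 1 (by decide) (Or.inl (by decide))) (by decide))]
    rw [add_zero, koszulSign_one, one_smul]
    refine congrArg (F 1) (funext fun j => ?_)
    refine Fin.cases ?_ (fun k => Fin.elim0 k) j
    rw [Fin.cons_zero]
    refine congrArg (Q 2) (funext fun k => congrArg x ?_)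
    rw [Equiv.Perm.one_apply]
    exact Fin.ext rfl

lemma fam1_one_apply {L : Type} [AddCommGroup L] [Module K L] (d : L →ₗ[K] L)
    (v : Fin 1 → L) : fam1 K L d 1 v = d (v 0) := rfl

end EvalLemmas

end Aux

/-- If an `L∞[1]` `R`-algebra `(L, d_L, q₂, q₃, …)` is
`R`-linearizable (isomorphic as an `L∞[1]` `R`-algebra to `(L, d_L, 0, 0, …)`),
then `q₂` is a coboundary in `(Hom_R(L^{⊙2}, L), d_L)`, i.e. `[q₂] = 0` in `H¹`. -/
theorem statement_3
    (K : Type) [Field K] (A : Type) [CommRing A] [Algebra K A]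
    (L : Type) [AddCommGroup L] [Module K L] [Module A L]
    (𝒜 : ℤ → Submodule K A) (dA : A →ₗ[K] A)
    (ℒ : ℤ → Submodule K L) (dL : L →ₗ[K] L)
    (q : ∀ k, MultilinearMap K (fun _ : Fin k => L) L)
    (h : IsLInftyAlg K A L 𝒜 dA ℒ dL q)
    (hlin : ∃ f, IsLInftyIso K A L L 𝒜 ℒ ℒ q (fam1 K L dL) f) :
    ∃ g : MultilinearMap K (fun _ : Fin 2 => L) L,
      IsGSMap K A L L 𝒜 ℒ ℒ 0 2 g ∧
      ∀ (i j : ℤ) (x y : L), x ∈ ℒ i → y ∈ ℒ j →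
        q 2 ![x, y] = dL (g ![x, y]) - (g ![dL x, y] + sgn i • g ![x, dL y]) := by
  obtain ⟨f, hf, g, hg, hgf, hfg⟩ := hlin
  have hfgs := hf.gs 2 (by norm_num)
  have hggs := hg.gs 1 (le_refl 1)
  set glin : L →ₗ[K] L := (MultilinearMap.ofSubsingleton K L L (0 : Fin 1)).symm (g 1) with hglin
  set G : MultilinearMap K (fun _ : Fin 2 => L) L := glin.compMultilinearMap (f 2) with hGdef
  -- g 1 commutes with dL on homogeneous elements
  have hcomm : ∀ (jd : ℤ) (z : L), z ∈ ℒ jd → dL (glin z) = glin (dL z) := by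
    intro jd z hz
    have hid := hg.identity 1 (fun _ => jd) (fun _ => z) (le_refl 1) (fun k => hz)
    rw [treeSum_one] at hid
    rw [insComp_one K g (fam1 K L dL) rfl] at hid
    rw [h.q_one] at hid
    simp only [fam1_one_apply] at hid
    exact hid
  -- g 1 retracts f 1 on homogeneous elements
  have hretr : ∀ (jd : ℤ) (z : L), z ∈ ℒ jd → glin (f 1 (fun _ => z)) = z := by
    intro jd z hz
    have hid := hgf 1 (fun _ => jd) (fun _ => z) (le_refl 1) (fun k => hz)
    unfold compFam at hid
    rw [treeSum_one] at hid
    rw [show fam1 K L (LinearMap.id : L →ₗ[K] L) 1 (fun _ : Fin 1 => z) = z from rfl] at hid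
    exact hid
  -- G is a graded symmetric map of degree 0
  have hGgs : IsGSMap K A L L 𝒜 ℒ ℒ 0 2 G := by
    constructor
    · intro deg xx hxx
      have h1 := hfgs.degree deg xx hxx
      have h2 := hggs.degree (fun _ => (∑ k, deg k) + 0) (fun _ => f 2 xx) (fun k => h1)
      show glin.compMultilinearMap (f 2) xx ∈ ℒ _
      rw [LinearMap.compMultilinearMap_apply]
      have e : (∑ k : Fin 1, ((∑ k, deg k) + 0)) + 0 = (∑ k, deg k) + 0 := by
        rw [Fin.sum_univ_one]; ring
      rw [e] at h2
      exact h2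
    · intro deg xx hxx σ
      rcases perm2_cases σ with rfl | rfl
      · rw [koszulSign_one, one_smul]
        exact congrArg G (funext fun k => by simp)
      · have h1 := hfgs.symm deg xx hxx (Equiv.swap 0 1)
        show glin.compMultilinearMap (f 2) (xx ∘ (Equiv.swap 0 1)) = _
        rw [LinearMap.compMultilinearMap_apply, h1, map_zsmul]
        rfl
    · intro hn ii a ha xx
      show glin.compMultilinearMap (f 2) _ = _
      rw [LinearMap.compMultilinearMap_apply, hfgs.smul hn ii a ha xx]
      have h2 := hggs.smul Nat.one_pos ii a ha (fun _ => f 2 xx)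
      have e : (Function.update (fun _ : Fin 1 => f 2 xx) ⟨0, Nat.one_pos⟩ (a • f 2 xx))
          = fun _ : Fin 1 => a • f 2 xx := by
        funext jj
        rw [Subsingleton.elim jj ⟨0, Nat.one_pos⟩]
        simp
      rw [e] at h2
      simp only [mul_zero, sgn_zero, one_smul] at h2 ⊢
      exact h2
  refine ⟨G, hGgs, ?_⟩
  intro i j x y hx hy
  -- memberships
  have hmemf2 : f 2 ![x, y] ∈ ℒ (i + j) := by
    have := hfgs.degree ![i, j] ![x, y] (by
      intro k; fin_cases k
      · simpa using hx
      · simpa using hy)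
    simpa using this
  have hmemq2 : q 2 ![x, y] ∈ ℒ (i + j + 1) := by
    have := (h.gs 2 (by norm_num)).degree ![i, j] ![x, y] (by
      intro k; fin_cases k
      · simpa using hx
      · simpa using hy)
    simpa using this
  -- the n = 2 morphism identity
  have hstar : dL (f 2 ![x, y])
      = f 2 ![dL x, y] + sgn (i * j) • f 2 ![dL y, x] + f 1 (fun _ => q 2 ![x, y]) := by
    have hid := hf.identity 2 ![i, j] ![x, y] (by norm_num) (by
      intro k; fin_cases k
      · simpa using hx
      · simpa using hy)
    rw [treeSum_fam1_two] at hid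
    rw [insComp_two K f q h.q_zero dL h.q_one] at hid
    simpa using hid
  have h2star := congrArg glin hstar
  rw [map_add, map_add, map_zsmul] at h2star
  rw [← hcomm (i + j) _ hmemf2] at h2star
  rw [hretr (i + j + 1) _ hmemq2] at h2star
  -- symmetry of G
  have hsymm := hGgs.symm ![i, j + 1] ![x, dL y] (by
    intro k; fin_cases k
    · simpa using hx
    · simpa using h.dgmod.d_mem j y hy) (Equiv.swap 0 1)
  rw [koszulSign_swap] at hsymm
  have htup : (![x, dL y] ∘ (Equiv.swap 0 1) : Fin 2 → L) = ![dL y, x] := by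
    funext k; fin_cases k <;> simp [Equiv.swap_apply_left, Equiv.swap_apply_right]
  rw [htup] at hsymm
  simp only [Matrix.cons_val_zero, Matrix.cons_val_one, Matrix.head_cons] at hsymm
  -- hsymm : G ![dL y, x] = sgn (i * (j + 1)) • G ![x, dL y]
  simp only [hGdef, LinearMap.compMultilinearMap_apply] at hsymm
  rw [hsymm] at h2star
  rw [smul_smul] at h2star
  have hsgn : sgn (i * j) * sgn (i * (j + 1)) = sgn i := by
    rw [← sgn_add]
    have e : i * j + i * (j + 1) = 2 * (i * j) + i := by ring
    rw [e, sgn_add, sgn_even ⟨i * j, by ring⟩, one_mul]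
  rw [hsgn] at h2star
  -- conclude
  show q 2 ![x, y] = dL (glin (f 2 ![x, y]))
    - (glin (f 2 ![dL x, y]) + sgn i • glin (f 2 ![x, dL y]))
  rw [h2star]
  abel

end

end Paper
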